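/- For partial constructor terms t and t' with t linear and substitutions: if tη ⊑ t' then for each variable X occurring in t at (unique) position p, the subterm of t' at position p exists and Xη is below it in the information ordering. -/

import Mathlib

/-- Partial constructor terms over variables `V`, basic values `B`, and
constructor symbols `C`: `t ::= ⊥ | X | u | c(t₁,…,tₙ)`. -/
inductive PTerm (V B C : Type) : Type
  | bot : PTerm V B C
  | var (x : V) : PTerm V B C
  | val (u : B) : PTerm V B C
  | app (c : C) (args : List (PTerm V B C)) : PTerm V B C

/-- The information ordering `⊑` on partial terms: the least relation compatible with
constructor contexts such that `⊥ ⊑ t` for all `t`. -/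
inductive InfoLe {V B C : Type} : PTerm V B C → PTerm V B C → Prop
  | bot (t : PTerm V B C) : InfoLe .bot t
  | var (x : V) : InfoLe (.var x) (.var x)
  | val (u : B) : InfoLe (.val u) (.val u)
  | app (c : C) {ts ts' : List (PTerm V B C)} :
      List.Forall₂ InfoLe ts ts' → InfoLe (.app c ts) (.app c ts')

/-- Homomorphic application of a substitution to a partial term. -/
def PTerm.subst {V B C : Type} (σ : V → PTerm V B C) : PTerm V B C → PTerm V B C
  | .bot => .bot
  | .var x => σ x
  | .val u => .val u
  | .app c ts => .app c (ts.attach.map (fun t => PTerm.subst σ t.1))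
  decreasing_by
    have := List.sizeOf_lt_of_mem t.2
    simp only [PTerm.app.sizeOf_spec]
    omega

/-- `x` occurs in the term `t`. -/
inductive PTerm.Occurs {V B C : Type} (x : V) : PTerm V B C → Prop
  | var : PTerm.Occurs x (.var x)
  | app {c : C} {ts : List (PTerm V B C)} {t : PTerm V B C} :
      t ∈ ts → PTerm.Occurs x t → PTerm.Occurs x (.app c ts)

/-- The list of variable occurrences of a term, in left-to-right order. -/
def PTerm.varList {V B C : Type} : PTerm V B C → List V
  | .bot => []
  | .var x => [x]
  | .val _ => []
  | .app _ ts => ts.attach.flatMap (fun t => PTerm.varList t.1)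
  decreasing_by
    have := List.sizeOf_lt_of_mem t.2
    simp only [PTerm.app.sizeOf_spec]
    omega

/-- A term is linear if no variable occurs twice in it. -/
def PTerm.Linear {V B C : Type} (t : PTerm V B C) : Prop := t.varList.Nodup

/-- The subterm of `t` at position `p` (a sequence of argument indices), when defined. -/
def PTerm.subtermAt {V B C : Type} : PTerm V B C → List ℕ → Option (PTerm V B C)
  | t, [] => some t
  | .app _ ts, i :: p => (ts[i]?).bind (fun t => PTerm.subtermAt t p)
  | .bot, _ :: _ => none
  | .var _, _ :: _ => none
  | .val _, _ :: _ => none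
  termination_by _ p => p.length

private lemma forall2_getElem? {α β : Type*} {R : α → β → Prop} :
    ∀ {l : List α} {l' : List β}, List.Forall₂ R l l' → ∀ {i : ℕ} {a : α},
    l[i]? = some a → ∃ b, l'[i]? = some b ∧ R a b := by
  intro l l' h
  induction h with
  | nil => intro i a h; simp at h
  | cons hr _ ih =>
    intro i a ha
    cases i with
    | zero => simp_all
    | succ n => simp only [List.getElem?_cons_succ] at ha ⊢; exact ih ha

private lemma main_aux {V B C : Type} (η : V → PTerm V B C) (x : V) :
    ∀ (p : List ℕ) (t t' : PTerm V B C), InfoLe (t.subst η) t' →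
    t.subtermAt p = some (.var x) →
    ∃ s : PTerm V B C, t'.subtermAt p = some s ∧ InfoLe (η x) s := by
  intro p
  induction p with
  | nil =>
    intro t t' hle hocc
    simp only [PTerm.subtermAt, Option.some.injEq] at hocc
    subst hocc
    simp only [PTerm.subst] at hle
    exact ⟨t', by simp [PTerm.subtermAt], hle⟩
  | cons i p ih =>
    intro t t' hle hocc
    cases t with
    | bot => simp [PTerm.subtermAt] at hocc
    | var y => simp [PTerm.subtermAt] at hocc
    | val u => simp [PTerm.subtermAt] at hocc
    | app c ts =>
      simp only [PTerm.subtermAt] at hocc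
      obtain ⟨ti, hti, hsub⟩ := Option.bind_eq_some_iff.mp hocc
      rw [PTerm.subst] at hle
      cases hle with
      | app _ hforall =>
        have hmap : (ts.attach.map (fun t => PTerm.subst η t.1))[i]?
            = some (PTerm.subst η ti) := by
          simp [List.map_attach_eq_pmap, List.getElem?_pmap, hti]
        obtain ⟨b, hb, hrb⟩ := forall2_getElem? hforall hmap
        obtain ⟨s, hs, hles⟩ := ih ti b hrb hsub
        exact ⟨s, by simp [PTerm.subtermAt, hb, hs], hles⟩

/-- If `t` is linear and `tη ⊑ t'`, then for each variable `x` occurring in `t` at a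
position `p`, the subterm of `t'` at position `p` exists and `η x` is below it in the
information ordering. -/
theorem linear_subst_position {V B C : Type} (t t' : PTerm V B C)
    (η : V → PTerm V B C) (hlin : t.Linear) (hle : InfoLe (t.subst η) t')
    (x : V) (p : List ℕ) (hocc : t.subtermAt p = some (.var x)) :
    ∃ s : PTerm V B C, t'.subtermAt p = some s ∧ InfoLe (η x) s :=
  main_aux η x p t t' hle hocc
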